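/- Let n = 12 and S = [[4,62],[2,64]]. There is no equitable 2-partition of the halved 12-cube with quotient matrix S, because the distance-4 distribution matrix S^{(4)} determined by the recursion S·S^{(i)} = C(n−i+2,2)·S^{(i−2)} + i(n−i)·S^{(i)} + C(i+2,2)·S^{(i+2)} (with S^{(0)} = Id, S^{(2)} = S) equals [[−1,496],[16,479]], which has a negative entry. -/

import Mathlib

open Finset

/-- The hypercube graph on binary words indexed by `ι`. -/
def cube (ι : Type*) [Fintype ι] [DecidableEq ι] : SimpleGraph (ι → ZMod 2) where
  Adj x y := hammingDist x y = 1
  symm := ⟨fun x y h => (hammingDist_comm y x).trans h⟩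
  loopless := ⟨fun x h => by simp [hammingDist_self] at h⟩

instance (ι : Type*) [Fintype ι] [DecidableEq ι] : DecidableRel (cube ι).Adj :=
  fun x y => inferInstanceAs (Decidable (hammingDist x y = 1))

/-- The halved hypercube: even-weight words, adjacent iff Hamming distance 2. -/
def halvedCube (ι : Type*) [Fintype ι] [DecidableEq ι] :
    SimpleGraph {x : ι → ZMod 2 // Even (hammingDist x 0)} where
  Adj x y := hammingDist x.1 y.1 = 2
  symm := ⟨fun x y h => (hammingDist_comm y.1 x.1).trans h⟩
  loopless := ⟨fun x h => by simp [hammingDist_self] at h⟩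

instance (ι : Type*) [Fintype ι] [DecidableEq ι] : DecidableRel (halvedCube ι).Adj :=
  fun x y => inferInstanceAs (Decidable (hammingDist x.1 y.1 = 2))

variable {V : Type*} [Fintype V] [DecidableEq V]

/-- Number of neighbors of `v` in the set `C`. -/
def nbrCount (G : SimpleGraph V) [DecidableRel G.Adj] (v : V) (C : Finset V) : ℕ :=
  (C.filter (G.Adj v)).card

/-- `(C0, C1)` is an equitable 2-partition with quotient matrix `[[a,b],[c,d]]`. -/
def IsEquitable2 (G : SimpleGraph V) [DecidableRel G.Adj] (C0 C1 : Finset V)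
    (a b c d : ℕ) : Prop :=
  Disjoint C0 C1 ∧ C0 ∪ C1 = Finset.univ ∧
  (∀ v ∈ C0, nbrCount G v C0 = a ∧ nbrCount G v C1 = b) ∧
  (∀ v ∈ C1, nbrCount G v C0 = c ∧ nbrCount G v C1 = d)

/-- `C` is an equitable `k`-partition with quotient matrix `S`. -/
def IsEquitableK (G : SimpleGraph V) [DecidableRel G.Adj] {k : ℕ}
    (C : V → Fin k) (S : Fin k → Fin k → ℕ) : Prop :=
  ∀ (v : V) (j : Fin k),
    (Finset.univ.filter (fun w => G.Adj v w ∧ C w = j)).card = S (C v) j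

lemma zmod2_cases (a : ZMod 2) : a = 0 ∨ a = 1 := by revert a; decide

lemma zmod2_ne_add_one (a : ZMod 2) : a + 1 ≠ a := by revert a; decide

lemma zmod2_add_one_eq {a b : ZMod 2} (h : a ≠ b) : a + 1 = b := by
  revert a b; decide

lemma hamming_parity {n : ℕ} (x y : Fin n → ZMod 2) :
    hammingDist x y % 2 = (hammingDist x 0 + hammingDist y 0) % 2 := by
  classical
  set A := univ.filter (fun i => x i ≠ 0) with hA
  set B := univ.filter (fun i => y i ≠ 0) with hB
  have hd : (univ.filter fun i => x i ≠ y i) = (A \ B) ∪ (B \ A) := by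
    ext i
    simp only [hA, hB, mem_union, mem_sdiff, mem_filter, mem_univ, true_and]
    rcases zmod2_cases (x i) with h1 | h1 <;> rcases zmod2_cases (y i) with h2 | h2 <;>
      simp [h1, h2]
  have hdx : hammingDist x 0 = A.card := by
    simp only [hammingDist, hA, Pi.zero_apply]
  have hdy : hammingDist y 0 = B.card := by
    simp only [hammingDist, hB, Pi.zero_apply]
  have hdxy : hammingDist x y = (A \ B).card + (B \ A).card := by
    rw [hammingDist]
    show (univ.filter fun i => x i ≠ y i).card = _
    rw [hd, card_union_of_disjoint (disjoint_sdiff_sdiff)]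
  have h1 := card_sdiff_add_card_inter A B
  have h2 := card_sdiff_add_card_inter B A
  rw [inter_comm] at h2
  omega

abbrev V12 := {x : Fin 12 → ZMod 2 // Even (hammingDist x 0)}

lemma common_lb (v u : V12) (h : hammingDist v.1 u.1 = 2) :
    20 ≤ ((univ.filter (fun w : V12 => hammingDist v.1 w.1 = 2)).filter
      (fun w : V12 => hammingDist w.1 u.1 = 2)).card := by
  classical
  set D : Finset (Fin 12) := univ.filter (fun i => v.1 i ≠ u.1 i) with hDdef
  have hD : D.card = 2 := h
  set wf : Fin 12 × Fin 12 → (Fin 12 → ZMod 2) :=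
    fun p i => if i = p.1 ∨ i = p.2 then v.1 i + 1 else v.1 i with hwf
  have key : ∀ p : Fin 12 × Fin 12, p.1 ∈ D → p.2 ∉ D →
      hammingDist v.1 (wf p) = 2 ∧ hammingDist (wf p) u.1 = 2 ∧
        Even (hammingDist (wf p) 0) := by
    intro p hp1 hp2
    have hne : p.1 ≠ p.2 := fun hh => hp2 (hh ▸ hp1)
    have hd1 : hammingDist v.1 (wf p) = 2 := by
      have hs : (univ.filter fun i => v.1 i ≠ wf p i) = {p.1, p.2} := by
        ext i
        simp only [mem_filter, mem_univ, true_and, mem_insert, mem_singleton, hwf]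
        by_cases hi : i = p.1 ∨ i = p.2
        · simp [hi, (zmod2_ne_add_one (v.1 i)).symm]
        · simp [hi]
      rw [hammingDist]
      show (univ.filter fun i => v.1 i ≠ wf p i).card = 2
      rw [hs, card_insert_of_notMem (by simpa using hne), card_singleton]
    refine ⟨hd1, ?_, ?_⟩
    · have hs : (univ.filter fun i => wf p i ≠ u.1 i) = insert p.2 (D.erase p.1) := by
        ext i
        simp only [mem_filter, mem_univ, true_and, mem_insert, mem_erase, hwf]
        by_cases hi1 : i = p.1
        · have hvu : v.1 p.1 ≠ u.1 p.1 := by simpa [hDdef] using hp1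
          simp [hi1, zmod2_add_one_eq hvu, hne]
        · by_cases hi2 : i = p.2
          · have hvu : v.1 p.2 = u.1 p.2 := by
              have h2 := hp2
              simp only [hDdef, mem_filter, mem_univ, true_and, not_not] at h2
              exact h2
            simp [hi2, hvu, zmod2_ne_add_one]
          · simp [hi1, hi2, hDdef]
      rw [hammingDist]
      show (univ.filter fun i => wf p i ≠ u.1 i).card = 2
      rw [hs, card_insert_of_notMem (fun hc => hp2 (mem_of_mem_erase hc)),
        card_erase_of_mem hp1, hD]
    · have hpar := hamming_parity v.1 (wf p)
      have hv2 := v.2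
      rw [Nat.even_iff] at hv2 ⊢
      rw [hd1] at hpar
      omega
  have hmaps : ∀ p ∈ D ×ˢ Dᶜ,
      (if h2 : Even (hammingDist (wf p) 0) then (⟨wf p, h2⟩ : V12) else v) ∈
        (univ.filter (fun w : V12 => hammingDist v.1 w.1 = 2)).filter
          (fun w : V12 => hammingDist w.1 u.1 = 2) := by
    intro p hp
    rw [mem_product] at hp
    obtain ⟨hd1, hd2, hev⟩ := key p hp.1 (by simpa using hp.2)
    rw [dif_pos hev]
    simp only [mem_filter, mem_univ, true_and]
    exact ⟨hd1, hd2⟩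
  have hinjOn : Set.InjOn
      (fun p => if h2 : Even (hammingDist (wf p) 0) then (⟨wf p, h2⟩ : V12) else v)
      ↑(D ×ˢ Dᶜ) := by
    intro p hp q hq hfeq
    rw [mem_coe, mem_product] at hp hq
    obtain ⟨hd1, hd2, hev⟩ := key p hp.1 (by simpa using hp.2)
    obtain ⟨hd1', hd2', hev'⟩ := key q hq.1 (by simpa using hq.2)
    simp only [dif_pos hev, dif_pos hev'] at hfeq
    have hw : wf p = wf q := congrArg Subtype.val hfeq
    have h1 : q.1 = p.1 := by
      have hcw := congrFun hw q.1
      by_cases hc : q.1 = p.1 ∨ q.1 = p.2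
      · rcases hc with hc | hc
        · exact hc
        · exact absurd (hc ▸ hq.1) (by simpa using hp.2)
      · rw [show wf p q.1 = v.1 q.1 from if_neg hc,
          show wf q q.1 = v.1 q.1 + 1 from if_pos (Or.inl rfl)] at hcw
        exact absurd hcw.symm (zmod2_ne_add_one (v.1 q.1))
    have h2 : q.2 = p.2 := by
      have hcw := congrFun hw q.2
      by_cases hc : q.2 = p.1 ∨ q.2 = p.2
      · rcases hc with hc | hc
        · exact absurd (hc ▸ hp.1) (by simpa using hq.2)
        · exact hc
      · rw [show wf p q.2 = v.1 q.2 from if_neg hc,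
          show wf q q.2 = v.1 q.2 + 1 from if_pos (Or.inr rfl)] at hcw
        exact absurd hcw.symm (zmod2_ne_add_one (v.1 q.2))
    exact Prod.ext h1.symm h2.symm
  have hle := card_le_card_of_injOn _ hmaps hinjOn
  have hcard : (D ×ˢ Dᶜ).card = 20 := by
    rw [card_product, hD, card_compl, hD]
    simp
  omega


lemma halved_adj (x y : V12) :
    (halvedCube (Fin 12)).Adj x y ↔ hammingDist x.1 y.1 = 2 := Iff.rfl

theorem test_main :
      ∀ C0 C1 : Finset {x : Fin 12 → ZMod 2 // Even (hammingDist x 0)},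
        ¬ IsEquitable2 (halvedCube (Fin 12)) C0 C1 4 62 2 64 := by
  intro C0 C1 hE
  obtain ⟨hdisj, huniv, h0, h1⟩ := hE
  set G := halvedCube (Fin 12) with hG
  -- C0 is nonempty
  have hz : (⟨0, by simp [hammingDist_self]⟩ : V12) ∈ C0 ∪ C1 := by
    rw [huniv]; exact mem_univ _
  obtain ⟨v, hv⟩ : ∃ v, v ∈ C0 := by
    rcases mem_union.mp hz with hh | hh
    · exact ⟨_, hh⟩
    · have h2 := (h1 _ hh).1
      rw [nbrCount] at h2
      obtain ⟨w, hw⟩ := card_pos.mp (lt_of_lt_of_eq (by norm_num : (0:ℕ) < 2) h2.symm)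
      exact ⟨w, (mem_filter.mp hw).1⟩
  set N : Finset V12 := univ.filter (G.Adj v) with hN
  have hNC0 : (N ∩ C0).card = 4 := by
    have : N ∩ C0 = C0.filter (G.Adj v) := by
      ext w; simp [hN, and_comm]; exact ⟨fun h => mem_filter.mpr ⟨h.2, h.1⟩, fun h => ⟨(mem_filter.mp h).2, (mem_filter.mp h).1⟩⟩
    rw [this]; exact (h0 v hv).1
  have hNC1 : (N ∩ C1).card = 62 := by
    have : N ∩ C1 = C1.filter (G.Adj v) := by
      ext w; simp [hN, and_comm]; exact ⟨fun h => mem_filter.mpr ⟨h.2, h.1⟩, fun h => ⟨(mem_filter.mp h).2, (mem_filter.mp h).1⟩⟩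
    rw [this]; exact (h0 v hv).2
  have hNsplit : N = (N ∩ C0) ∪ (N ∩ C1) := by
    rw [← inter_union_distrib_left, huniv, inter_univ]
  have hNdisj : Disjoint (N ∩ C0) (N ∩ C1) :=
    hdisj.mono inter_subset_right inter_subset_right
  have hNcard : N.card = 66 := by
    rw [hNsplit, card_union_of_disjoint hNdisj, hNC0, hNC1]
  -- LHS of double counting
  have hLHS : ∑ w ∈ N, nbrCount G w C0 = 140 := by
    rw [hNsplit, sum_union hNdisj]
    have e0 : ∑ w ∈ N ∩ C0, nbrCount G w C0 = 16 := by
      rw [sum_congr rfl (fun w hw => (h0 w (mem_inter.mp hw).2).1), sum_const, hNC0]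
      norm_num
    have e1 : ∑ w ∈ N ∩ C1, nbrCount G w C0 = 124 := by
      rw [sum_congr rfl (fun w hw => (h1 w (mem_inter.mp hw).2).1), sum_const, hNC1]
      norm_num
    rw [e0, e1]
  -- swap the order of summation
  set f : V12 → ℕ := fun x => (N.filter (fun w => G.Adj w x)).card with hf
  have hswap : ∑ w ∈ N, nbrCount G w C0 = ∑ x ∈ C0, f x := by
    simp only [hf, nbrCount]
    simp_rw [card_filter]
    exact Finset.sum_comm
  -- lower bound on the RHS
  have hvN : v ∉ N := by intro h; rw [hN] at h; exact G.irrefl (mem_filter.mp h).2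
  have hsub : insert v (N ∩ C0) ⊆ C0 :=
    insert_subset hv inter_subset_right
  have hgv : f v = 66 := by
    show (N.filter (fun w => G.Adj w v)).card = 66
    rw [filter_true_of_mem (fun w hw => ((mem_filter.mp hw).2).symm), hNcard]
  have hterm : ∀ x ∈ N ∩ C0, 20 ≤ f x := by
    intro x hx
    have hadj : G.Adj v x := (mem_filter.mp (mem_inter.mp hx).1).2
    exact common_lb v x hadj
  have h20 : 80 ≤ ∑ x ∈ N ∩ C0, f x := by
    have hs := Finset.card_nsmul_le_sum (N ∩ C0) f 20 hterm
    rw [hNC0] at hs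
    simpa using hs
  have hRHS : 146 ≤ ∑ x ∈ C0, f x := by
    have hmono := sum_le_sum_of_subset (f := f) hsub
    rw [sum_insert (fun hc => hvN (mem_inter.mp hc).1)] at hmono
    rw [hgv] at hmono
    exact le_trans (le_trans (by norm_num) (Nat.add_le_add_left h20 66)) hmono
  rw [← hswap, hLHS] at hRHS
  omega

/-- for `n = 12` and `S = [[4,62],[2,64]]`, the distance-4
distribution matrix `S⁽⁴⁾ = (S² - 66·Id - 20·S)/6` equals `[[-1,496],[16,479]]`
(equivalently `S² = 66·Id + 20·S + 6·S⁽⁴⁾`), whose negative entry shows that no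
equitable 2-partition of the halved 12-cube has quotient matrix `S`. -/
theorem stmt14 :
    ((!![(4 : ℚ), 62; 2, 64]) ^ 2 - (66 : ℚ) • 1 - (20 : ℚ) • !![(4 : ℚ), 62; 2, 64] =
        (6 : ℚ) • !![(-1 : ℚ), 496; 16, 479]) ∧
      ∀ C0 C1 : Finset {x : Fin 12 → ZMod 2 // Even (hammingDist x 0)},
        ¬ IsEquitable2 (halvedCube (Fin 12)) C0 C1 4 62 2 64 := by
  constructor
  · ext i j
    fin_cases i <;> fin_cases j <;>
      simp [pow_two, Matrix.mul_apply, Fin.sum_univ_succ, Matrix.one_apply] <;> norm_num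
  · exact test_main
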